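/- Let p > 2, 0 < d₀ ≤ ∞, let q : (0, d₀) → (0, ∞] be measurable, and let Φ : (0, d₀) → (0, ∞) be a nondecreasing function such that for almost every t ∈ (0, d₀) the derivative Φ′(t) exists and satisfies 2·π^{(p−2)/(2(p−1))} / ( t^{1/(p−1)} · q(t)^{1/(p−1)} ) ≤ Φ′(t) / Φ(t)^{p/(2(p−1))}. Then for every r ∈ (0, d₀), Φ(r) ≥ π · ((p−2)/(p−1))^{2(p−1)/(p−2)} · ( ∫₀^r dt / ( t^{1/(p−1)} · q(t)^{1/(p−1)} ) )^{2(p−1)/(p−2)}. -/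

import Mathlib

open MeasureTheory Set ENNReal

noncomputable section

/-- Integral of the derivative of a monotone function over an open interval is
bounded by the increment. -/
lemma lintegral_deriv_le_of_monotone {F : ℝ → ℝ} (hF : Monotone F) (a b : ℝ) :
    ∫⁻ x in Set.Ioo a b, ENNReal.ofReal (deriv F x) ≤ ENNReal.ofReal (F b - F a) := by
  set μ := hF.stieltjesFunction.measure with hμ
  have h1 : ∀ᵐ x ∂(volume : Measure ℝ),
      ENNReal.ofReal (deriv F x) ≤ μ.rnDeriv volume x := by
    filter_upwards [hF.ae_hasDerivAt] with x hx
    rw [hx.deriv]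
    exact ENNReal.ofReal_toReal_le
  calc ∫⁻ x in Set.Ioo a b, ENNReal.ofReal (deriv F x)
      ≤ ∫⁻ x in Set.Ioo a b, μ.rnDeriv volume x :=
        lintegral_mono_ae (ae_restrict_of_ae h1)
    _ = (volume.withDensity (μ.rnDeriv volume)) (Set.Ioo a b) :=
        (withDensity_apply _ measurableSet_Ioo).symm
    _ ≤ μ (Set.Ioo a b) := Measure.withDensity_rnDeriv_le μ volume _
    _ = ENNReal.ofReal (Function.leftLim hF.stieltjesFunction b - hF.stieltjesFunction a) :=
        hF.stieltjesFunction.measure_Ioo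
    _ ≤ ENNReal.ofReal (F b - F a) := by
        apply ENNReal.ofReal_le_ofReal
        have h2 : F a ≤ hF.stieltjesFunction a := by
          rw [hF.stieltjesFunction_eq]; exact hF.le_rightLim le_rfl
        have h3 : Function.leftLim (hF.stieltjesFunction) b ≤ F b := by
          apply le_of_tendsto (hF.stieltjesFunction.mono.tendsto_leftLim b)
          filter_upwards [self_mem_nhdsWithin] with y (hy : y < b)
          rw [hF.stieltjesFunction_eq]
          exact hF.rightLim_le hy
        linarith

lemma lintegral_deriv_le_of_monotoneOn {g : ℝ → ℝ} {a b : ℝ} (hab : a ≤ b)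
    (hg : MonotoneOn g (Set.Icc a b)) :
    ∫⁻ x in Set.Ioo a b, ENNReal.ofReal (deriv g x) ≤ ENNReal.ofReal (g b - g a) := by
  set G : ℝ → ℝ := fun t => g (min (max t a) b) with hG_def
  have hmemIcc : ∀ t : ℝ, min (max t a) b ∈ Set.Icc a b := fun t =>
    ⟨le_min (le_max_right _ _) hab, min_le_right _ _⟩
  have hG : Monotone G := fun x y hxy =>
    hg (hmemIcc x) (hmemIcc y) (min_le_min (max_le_max hxy le_rfl) le_rfl)
  have hGb : G b = g b := by
    rw [hG_def]; simp only; rw [max_eq_left hab, min_self]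
  have hGa : G a = g a := by
    rw [hG_def]; simp only; rw [max_self, min_eq_left hab]
  have hcongr : ∀ x ∈ Set.Ioo a b, ENNReal.ofReal (deriv g x) = ENNReal.ofReal (deriv G x) := by
    intro x hx
    congr 1
    apply Filter.EventuallyEq.deriv_eq
    filter_upwards [isOpen_Ioo.mem_nhds hx] with y hy
    rw [hG_def]; simp only
    rw [max_eq_left hy.1.le, min_eq_left hy.2.le]
  calc ∫⁻ x in Set.Ioo a b, ENNReal.ofReal (deriv g x)
      = ∫⁻ x in Set.Ioo a b, ENNReal.ofReal (deriv G x) :=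
        setLIntegral_congr_fun measurableSet_Ioo hcongr
    _ ≤ ENNReal.ofReal (G b - G a) := lintegral_deriv_le_of_monotone hG a b
    _ = ENNReal.ofReal (g b - g a) := by rw [hGb, hGa]

/-- If `Φ : (0,d₀) → (0,∞)` is nondecreasing and satisfies the differential inequality
`2 π^{(p-2)/(2(p-1))} / (t^{1/(p-1)} q(t)^{1/(p-1)}) ≤ Φ'(t)/Φ(t)^{p/(2(p-1))}` a.e., then
`Φ(r) ≥ π ((p-2)/(p-1))^{2(p-1)/(p-2)} (∫₀^r dt/(t^{1/(p-1)} q(t)^{1/(p-1)}))^{2(p-1)/(p-2)}`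
for all `r ∈ (0,d₀)`. -/
theorem growth_from_differential_inequality
    (p : ℝ) (hp : 2 < p) (d₀ : ℝ≥0∞) (hd₀ : 0 < d₀)
    (q : ℝ → ℝ≥0∞) (hqmeas : Measurable q)
    (hqpos : ∀ t : ℝ, 0 < t → ENNReal.ofReal t < d₀ → 0 < q t)
    (Φ : ℝ → ℝ)
    (hΦpos : ∀ t : ℝ, 0 < t → ENNReal.ofReal t < d₀ → 0 < Φ t)
    (hΦmono : MonotoneOn Φ {t : ℝ | 0 < t ∧ ENNReal.ofReal t < d₀})
    (hΦ : ∀ᵐ t ∂(volume : Measure ℝ), 0 < t → ENNReal.ofReal t < d₀ →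
      DifferentiableAt ℝ Φ t ∧
        ENNReal.ofReal (2 * Real.pi ^ ((p - 2) / (2 * (p - 1)))) *
            (ENNReal.ofReal t ^ (1 / (p - 1)) * q t ^ (1 / (p - 1)))⁻¹ ≤
          ENNReal.ofReal (deriv Φ t / Φ t ^ (p / (2 * (p - 1)))))
    (r : ℝ) (hr0 : 0 < r) (hr : ENNReal.ofReal r < d₀) :
    ENNReal.ofReal (Real.pi * ((p - 2) / (p - 1)) ^ (2 * (p - 1) / (p - 2))) *
        (∫⁻ t in Set.Ioo (0 : ℝ) r,
          (ENNReal.ofReal t ^ (1 / (p - 1)) * q t ^ (1 / (p - 1)))⁻¹) ^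
          (2 * (p - 1) / (p - 2)) ≤
      ENNReal.ofReal (Φ r) := by
  have hp1 : (0:ℝ) < p - 1 := by linarith
  have hp2 : (0:ℝ) < p - 2 := by linarith
  have hne1 : p - 1 ≠ 0 := ne_of_gt hp1
  have hne2 : p - 2 ≠ 0 := ne_of_gt hp2
  set α : ℝ := (p - 2) / (2 * (p - 1)) with hα_def
  have hα : 0 < α := by positivity
  set c : ℝ := 2 * (p - 1) / (p - 2) with hc_def
  have hc : 0 ≤ c := by positivity
  have hαc : α * c = 1 := by rw [hα_def, hc_def]; field_simp
  set g : ℝ → ℝ := fun t => Φ t ^ α with hg_def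
  set f : ℝ → ℝ≥0∞ :=
    fun t => (ENNReal.ofReal t ^ (1 / (p - 1)) * q t ^ (1 / (p - 1)))⁻¹ with hf_def
  set C : ℝ≥0∞ := ENNReal.ofReal α * ENNReal.ofReal (2 * Real.pi ^ α) with hC_def
  have hC_ne_top : C ≠ ⊤ := ENNReal.mul_ne_top ENNReal.ofReal_ne_top ENNReal.ofReal_ne_top
  -- key estimate for each ε ∈ (0, r)
  have key : ∀ ε : ℝ, 0 < ε → ε < r →
      C * ∫⁻ t in Set.Ioo ε r, f t ≤ ENNReal.ofReal (Φ r ^ α) := by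
    intro ε hε hεr
    have hmem : ∀ t : ℝ, ε ≤ t → t ≤ r → 0 < t ∧ ENNReal.ofReal t < d₀ := fun t h1 h2 =>
      ⟨hε.trans_le h1, lt_of_le_of_lt (ENNReal.ofReal_le_ofReal h2) hr⟩
    have hgmono : MonotoneOn g (Set.Icc ε r) := by
      intro x hx y hy hxy
      have hx' := hmem x hx.1 hx.2
      have hy' := hmem y hy.1 hy.2
      exact Real.rpow_le_rpow (hΦpos x hx'.1 hx'.2).le (hΦmono hx' hy' hxy) hα.le
    have hae : ∀ᵐ t ∂(volume : Measure ℝ), t ∈ Set.Ioo ε r →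
        C * f t ≤ ENNReal.ofReal (deriv g t) := by
      filter_upwards [hΦ] with t ht htmem
      obtain ⟨ht0, htd⟩ := hmem t htmem.1.le htmem.2.le
      obtain ⟨hdiff, hineq⟩ := ht ht0 htd
      have hΦt := hΦpos t ht0 htd
      have hD : HasDerivAt g (α * Φ t ^ (α - 1) * deriv Φ t) t :=
        (Real.hasDerivAt_rpow_const (Or.inl hΦt.ne')).comp t hdiff.hasDerivAt
      have hval : α * Φ t ^ (α - 1) * deriv Φ t
          = α * (deriv Φ t / Φ t ^ (p / (2 * (p - 1)))) := by
        rw [show α - 1 = -(p / (2 * (p - 1))) by rw [hα_def]; field_simp; ring,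
          Real.rpow_neg hΦt.le]
        ring
      rw [hD.deriv, hval, ENNReal.ofReal_mul hα.le, hC_def, mul_assoc]
      exact mul_le_mul_right hineq _
    calc C * ∫⁻ t in Set.Ioo ε r, f t
        = ∫⁻ t in Set.Ioo ε r, C * f t := (lintegral_const_mul' _ _ hC_ne_top).symm
      _ ≤ ∫⁻ t in Set.Ioo ε r, ENNReal.ofReal (deriv g t) :=
          lintegral_mono_ae ((ae_restrict_iff' measurableSet_Ioo).2 hae)
      _ ≤ ENNReal.ofReal (g r - g ε) := lintegral_deriv_le_of_monotoneOn hεr.le hgmono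
      _ ≤ ENNReal.ofReal (Φ r ^ α) := by
          apply ENNReal.ofReal_le_ofReal
          have h0 : (0:ℝ) ≤ Φ ε ^ α := Real.rpow_nonneg (hΦpos ε hε
            (lt_of_le_of_lt (ENNReal.ofReal_le_ofReal hεr.le) hr)).le _
          simp only [hg_def]
          linarith
  -- pass to the limit ε → 0
  have hunion : Set.Ioo (0:ℝ) r = ⋃ n : ℕ, Set.Ioo (r / (n + 2)) r := by
    ext t
    simp only [Set.mem_Ioo, Set.mem_iUnion]
    constructor
    · rintro ⟨ht0, htr⟩
      obtain ⟨n, hn⟩ := exists_nat_gt (r / t)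
      refine ⟨n, ?_, htr⟩
      rw [div_lt_iff₀ (by positivity)]
      rw [div_lt_iff₀ ht0] at hn
      nlinarith
    · rintro ⟨n, hn1, hn2⟩
      exact ⟨lt_of_le_of_lt (by positivity) hn1, hn2⟩
  have hdir : Directed (· ⊆ ·) (fun n : ℕ => Set.Ioo (r / (n + 2)) r) := by
    intro m n
    refine ⟨max m n, Set.Ioo_subset_Ioo ?_ le_rfl, Set.Ioo_subset_Ioo ?_ le_rfl⟩
    · apply div_le_div_of_nonneg_left hr0.le (by positivity)
      have : (m:ℝ) ≤ ((max m n : ℕ) : ℝ) := by exact_mod_cast le_max_left m n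
      linarith
    · apply div_le_div_of_nonneg_left hr0.le (by positivity)
      have : (n:ℝ) ≤ ((max m n : ℕ) : ℝ) := by exact_mod_cast le_max_right m n
      linarith
  have hsup : ∫⁻ t in Set.Ioo (0:ℝ) r, f t
      = ⨆ n : ℕ, ∫⁻ t in Set.Ioo (r / (n + 2)) r, f t := by
    rw [hunion]
    exact setLIntegral_iUnion_of_directed _ hdir
  have hεn : ∀ n : ℕ, 0 < r / ((n:ℝ) + 2) ∧ r / ((n:ℝ) + 2) < r := by
    intro n
    constructor
    · positivity
    · apply div_lt_self hr0
      have : (0:ℝ) ≤ (n:ℝ) := Nat.cast_nonneg n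
      linarith
  have hmain : C * ∫⁻ t in Set.Ioo (0:ℝ) r, f t ≤ ENNReal.ofReal (Φ r ^ α) := by
    rw [hsup, ENNReal.mul_iSup]
    exact iSup_le fun n => key _ (hεn n).1 (hεn n).2
  -- final algebra
  have h2 : (C * ∫⁻ t in Set.Ioo (0:ℝ) r, f t) ^ c ≤ (ENNReal.ofReal (Φ r ^ α)) ^ c :=
    ENNReal.rpow_le_rpow hmain hc
  rw [ENNReal.mul_rpow_of_nonneg _ _ hc] at h2
  have hΦr : 0 < Φ r := hΦpos r hr0 hr
  have hCc : C ^ c = ENNReal.ofReal (Real.pi * ((p - 2) / (p - 1)) ^ c) := by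
    rw [hC_def, ← ENNReal.ofReal_mul hα.le,
      ENNReal.ofReal_rpow_of_nonneg (by positivity) hc]
    congr 1
    have h2α : α * 2 = (p - 2) / (p - 1) := by rw [hα_def]; field_simp
    calc (α * (2 * Real.pi ^ α)) ^ c
        = (((p - 2) / (p - 1)) * Real.pi ^ α) ^ c := by rw [← h2α]; ring_nf
      _ = ((p - 2) / (p - 1)) ^ c * (Real.pi ^ α) ^ c :=
          Real.mul_rpow (by positivity) (by positivity)
      _ = ((p - 2) / (p - 1)) ^ c * Real.pi := by
          rw [← Real.rpow_mul Real.pi_nonneg, hαc, Real.rpow_one]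
      _ = Real.pi * ((p - 2) / (p - 1)) ^ c := mul_comm _ _
  have hRHS : (ENNReal.ofReal (Φ r ^ α)) ^ c = ENNReal.ofReal (Φ r) := by
    rw [ENNReal.ofReal_rpow_of_nonneg (Real.rpow_nonneg hΦr.le _) hc,
      ← Real.rpow_mul hΦr.le, hαc, Real.rpow_one]
  rw [hCc, hRHS] at h2
  exact h2
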